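/- The fully observable minimum under-approximates all observation-based policy values: in a POMDP with reward function R and goal set G, for every observation-based policy σ, every n ∈ ℕ, and every s ∈ S, U_n(s) ≤ W_n^σ(s). -/

import Mathlib

open Finset

attribute [local instance] Classical.propDecidable

noncomputable section

/-- A belief over a finite type `S`: a nonnegative function summing to one. -/
def IsBelief {S : Type} [Fintype S] (b : S → ℝ) : Prop :=
  (∀ s, 0 ≤ b s) ∧ (∑ s, b s = 1)

/-- A belief clip for a belief `b`: `0 ≤ μ(s) ≤ b(s)` pointwise and `Σμ < 1`. -/
def IsBeliefClip {S : Type} [Fintype S] (b μ : S → ℝ) : Prop :=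
  (∀ s, 0 ≤ μ s ∧ μ s ≤ b s) ∧ (∑ s, μ s < 1)

/-- The induced function `b ⊖ μ`, defined by `(b ⊖ μ)(s) = (b(s) − μ(s)) / (1 − Σμ)`. -/
def clipped {S : Type} [Fintype S] (b μ : S → ℝ) : S → ℝ :=
  fun s => (b s - μ s) / (1 - ∑ s', μ s')

variable {S Act Z : Type}

/-- The set of actions enabled in state `s`: those whose outgoing probabilities sum to 1. -/
def enabledA [Fintype S] [Fintype Act] (P : S → Act → S → ℝ) (s : S) : Finset Act :=
  univ.filter fun α => ∑ s' : S, P s α s' = 1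

/-- The actions enabled at an observation `z`: `Act(z) = Act(s)` for some `s` with `O s = z`. -/
def obsEnabled [Fintype S] [Fintype Act] (O : S → Z) (P : S → Act → S → ℝ) (z : Z) :
    Finset Act :=
  if h : ∃ s, O s = z then enabledA P h.choose else ∅

/-- The POMDP assumptions on the observation function `O` and the transition function `P`:
nonnegative transition probabilities, each state-action row sums to 0 or 1, every state has
some enabled action, and equally-observed states have equal enabled actions. -/
def IsPOMDP [Fintype S] [Fintype Act] (O : S → Z) (P : S → Act → S → ℝ) : Prop :=
  (∀ s α s', 0 ≤ P s α s') ∧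
  (∀ s α, (∑ s', P s α s') = 0 ∨ (∑ s', P s α s') = 1) ∧
  (∀ s, (enabledA P s).Nonempty) ∧
  (∀ s s', O s = O s' → enabledA P s = enabledA P s')

/-- `b` has observation `z`: the support of `b` is contained in `O⁻¹(z)`. -/
def HasObs (O : S → Z) (b : S → ℝ) (z : Z) : Prop :=
  ∀ s, 0 < b s → O s = z

/-- `P(s,α,z)`: probability to observe `z` after taking `α` in state `s`. -/
def Pso [Fintype S] (O : S → Z) (P : S → Act → S → ℝ) (s : S) (α : Act) (z : Z) : ℝ :=
  ∑ s' : S, if O s' = z then P s α s' else 0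

/-- `P(b,α,z)`: probability to observe `z` after taking `α` in belief `b`. -/
def Pbo [Fintype S] (O : S → Z) (P : S → Act → S → ℝ) (b : S → ℝ) (α : Act) (z : Z) : ℝ :=
  ∑ s : S, b s * Pso O P s α z

/-- The successor belief `⟦b|α,z⟧`. -/
def succB [Fintype S] (O : S → Z) (P : S → Act → S → ℝ) (b : S → ℝ) (α : Act) (z : Z) :
    S → ℝ :=
  fun s => if O s = z then (∑ s' : S, b s' * P s' α s) / Pbo O P b α z else 0

/-- The belief reward `R(b,α,z)`. -/
def Rbel [Fintype S] (O : S → Z) (P R : S → Act → S → ℝ) (b : S → ℝ) (α : Act) (z : Z) : ℝ :=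
  (∑ s : S, b s * ∑ s' : S, if O s' = z then R s α s' * P s α s' else 0) / Pbo O P b α z

/-- The last observation of a finite observation trace `z₀ α₁ z₁ … αₙ zₙ`,
represented as the pair of `z₀` and the list `[(α₁,z₁),…,(αₙ,zₙ)]`. -/
def lastObs (τ : Z × List (Act × Z)) : Z :=
  (τ.2.getLast?.map Prod.snd).getD τ.1

/-- An observation-based policy: to each finite observation trace it assigns a probability
distribution over actions supported on the actions enabled at the last observation. -/
def IsObsPolicy [Fintype S] [Fintype Act] (O : S → Z) (P : S → Act → S → ℝ)
    (σ : Z × List (Act × Z) → Act → ℝ) : Prop :=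
  ∀ τ, (∀ α, 0 ≤ σ τ α) ∧ (∑ α, σ τ α = 1) ∧
    (∀ α, σ τ α ≠ 0 → ∀ s, O s = lastObs τ → α ∈ enabledA P s)

/-- The shifted policy `σ⇝(z,α)`, behaving as `σ` after observing `z` and taking `α`. -/
def shiftPol (σ : Z × List (Act × Z) → Act → ℝ) (z : Z) (α : Act) :
    Z × List (Act × Z) → Act → ℝ :=
  fun τ => σ (z, (α, τ.1) :: τ.2)

/-- Goal states are observable: membership in `G` is determined by the observation. -/
def ObservableGoal (O : S → Z) (G : Set S) : Prop :=
  ∃ Z' : Set Z, ∀ s, s ∈ G ↔ O s ∈ Z'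

/-- The `n`-step state values `W_n^σ` under an observation-based policy `σ`. -/
def Wval [Fintype S] [Fintype Act] (O : S → Z) (P R : S → Act → S → ℝ) (G : Set S) :
    ℕ → (Z × List (Act × Z) → Act → ℝ) → S → ℝ
  | 0, _, _ => 0
  | n+1, σ, s =>
    if s ∈ G then 0
    else ∑ α ∈ enabledA P s, σ (O s, []) α *
      ∑ s' : S, P s α s' * (R s α s' + Wval O P R G n (shiftPol σ (O s) α) s')

/-- The `n`-step belief values `V_n^σ(b)` under policy `σ`, for a belief `b` with
observation `z`. -/
def Vpol [Fintype S] [Fintype Act] [Fintype Z] (O : S → Z) (P R : S → Act → S → ℝ)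
    (G : Set S) :
    ℕ → (Z × List (Act × Z) → Act → ℝ) → (S → ℝ) → Z → ℝ
  | 0, _, _, _ => 0
  | n+1, σ, b, z =>
    if ∀ s, 0 < b s → s ∈ G then 0
    else ∑ α ∈ obsEnabled O P z, σ (z, []) α *
      ∑ z' ∈ univ.filter (fun z' => 0 < Pbo O P b α z'),
        Pbo O P b α z' *
          (Rbel O P R b α z' + Vpol O P R G n (shiftPol σ z α) (succB O P b α z') z')

/-- Maximum of `f` over a finite set (0 for the empty set). -/
def maxOver {α : Type} (t : Finset α) (f : α → ℝ) : ℝ :=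
  if h : t.Nonempty then t.sup' h f else 0

/-- Minimum of `f` over a finite set (0 for the empty set). -/
def minOver {α : Type} (t : Finset α) (f : α → ℝ) : ℝ :=
  if h : t.Nonempty then t.inf' h f else 0

/-- The `n`-step optimal belief values `V_n(b)`, for a belief `b` with observation `z`. -/
def Vopt [Fintype S] [Fintype Act] [Fintype Z] (O : S → Z) (P R : S → Act → S → ℝ)
    (G : Set S) :
    ℕ → (S → ℝ) → Z → ℝ
  | 0, _, _ => 0
  | n+1, b, z =>
    if ∀ s, 0 < b s → s ∈ G then 0
    else maxOver (obsEnabled O P z) fun α =>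
      ∑ z' ∈ univ.filter (fun z' => 0 < Pbo O P b α z'),
        Pbo O P b α z' * (Rbel O P R b α z' + Vopt O P R G n (succB O P b α z') z')

/-- The `n`-step minimal values `U_n` on the underlying fully observable MDP. -/
def Umin [Fintype S] [Fintype Act] (P R : S → Act → S → ℝ) (G : Set S) : ℕ → S → ℝ
  | 0, _ => 0
  | n+1, s =>
    if s ∈ G then 0
    else minOver (enabledA P s) fun α =>
      ∑ s' : S, P s α s' * (R s α s' + Umin P R G n s')

end


/-- the fully observable minimum under-approximates all observation-based
policy values: `U_n(s) ≤ W_n^σ(s)`. -/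
theorem stmt_16 {S Act Z : Type} [Fintype S] [Nonempty S] [Fintype Act] [Nonempty Act]
    [Fintype Z] [Nonempty Z]
    (O : S → Z) (P : S → Act → S → ℝ) (hM : IsPOMDP O P)
    (R : S → Act → S → ℝ) (G : Set S)
    (σ : Z × List (Act × Z) → Act → ℝ) (hσ : IsObsPolicy O P σ) (n : ℕ) (s : S) :
    Umin P R G n s ≤ Wval O P R G n σ s := by
  induction n generalizing σ s with
  | zero => simp [Umin, Wval]
  | succ n ih =>
    have hshift : ∀ z α, IsObsPolicy O P (shiftPol σ z α) := by
      intro z α τ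
      have hlast : lastObs (z, (α, τ.1) :: τ.2) = lastObs τ := by
        cases' τ with z0 l
        cases l with
        | nil => simp [lastObs]
        | cons h t => simp [lastObs, List.getLast?_cons]
      obtain ⟨h1, h2, h3⟩ := hσ (z, (α, τ.1) :: τ.2)
      exact ⟨h1, h2, fun β hβ s hs => h3 β hβ s (hs.trans hlast.symm)⟩
    simp only [Umin, Wval]
    by_cases hG : s ∈ G
    · simp [hG]
    simp only [hG, if_false]
    obtain ⟨h1, h2, h3⟩ := hσ (O s, [])
    have hsupp : ∀ α ∉ enabledA P s, σ (O s, []) α = 0 := by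
      intro α hα
      by_contra h
      exact hα (h3 α h s rfl)
    have hsum1 : ∑ α ∈ enabledA P s, σ (O s, []) α = 1 := by
      rw [← h2]
      exact Finset.sum_subset (Finset.subset_univ _)
        (fun α _ hα => hsupp α hα)
    have hne := hM.2.2.1 s
    have hmin : minOver (enabledA P s)
        (fun α => ∑ s' : S, P s α s' * (R s α s' + Umin P R G n s')) =
        (enabledA P s).inf' hne
          (fun α => ∑ s' : S, P s α s' * (R s α s' + Umin P R G n s')) := by
      simp [minOver, hne]
    rw [hmin]
    calc (enabledA P s).inf' hne
          (fun α => ∑ s' : S, P s α s' * (R s α s' + Umin P R G n s'))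
        = ∑ α ∈ enabledA P s, σ (O s, []) α *
            ((enabledA P s).inf' hne
              (fun α => ∑ s' : S, P s α s' * (R s α s' + Umin P R G n s'))) := by
          rw [← Finset.sum_mul, hsum1, one_mul]
      _ ≤ ∑ α ∈ enabledA P s, σ (O s, []) α *
            ∑ s' : S, P s α s' * (R s α s' + Wval O P R G n (shiftPol σ (O s) α) s') := by
          apply Finset.sum_le_sum
          intro α hα
          apply mul_le_mul_of_nonneg_left _ (h1 α)
          calc (enabledA P s).inf' hne
                (fun α => ∑ s' : S, P s α s' * (R s α s' + Umin P R G n s'))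
              ≤ ∑ s' : S, P s α s' * (R s α s' + Umin P R G n s') :=
                Finset.inf'_le _ hα
            _ ≤ ∑ s' : S, P s α s' * (R s α s' + Wval O P R G n (shiftPol σ (O s) α) s') := by
                apply Finset.sum_le_sum
                intro s' _
                exact mul_le_mul_of_nonneg_left
                  (add_le_add_right (ih (shiftPol σ (O s) α) (hshift (O s) α) s') _)
                  (hM.1 s α s')
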